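/- Let $m \ge 2$ be an integer and let $b_1, \dots, b_m$ be real numbers with $\sum_{i=1}^m b_i = 0$. Then $\sum_{i=1}^m b_i^3 = \frac{m-2}{\sqrt{m(m-1)}}\left(\sum_{i=1}^m b_i^2\right)^{3/2}$ if and only if there exist an index $j \in \{1,\dots,m\}$ and a real number $b \le 0$ such that $b_i = b$ for all $i \ne j$; similarly, $\sum_{i=1}^m b_i^3 = -\frac{m-2}{\sqrt{m(m-1)}}\left(\sum_{i=1}^m b_i^2\right)^{3/2}$ if and only if there exist an index $j$ and a real number $b \ge 0$ such that $b_i = b$ for all $i \ne j$. -/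
import Mathlib

open Finset

/-- Upper-bound equality case of Okumura's lemma. -/
lemma okumura_upper (m : ℕ) (hm : 2 ≤ m) (b : Fin m → ℝ)
    (hsum : ∑ i, b i = 0) :
    (∑ i, (b i) ^ 3 =
        (((m : ℝ) - 2) / Real.sqrt ((m : ℝ) * ((m : ℝ) - 1))) *
          (∑ i, (b i) ^ 2) ^ ((3 : ℝ) / 2)) ↔
      ∃ j : Fin m, ∃ c : ℝ, c ≤ 0 ∧ ∀ i : Fin m, i ≠ j → b i = c := by
  have hm1 : 1 ≤ m := by omega
  set M : ℝ := (m : ℝ) with hM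
  have hM2 : (2 : ℝ) ≤ M := by rw [hM]; exact_mod_cast hm
  have hMpos : (0 : ℝ) < M := by linarith
  have hM1 : (0 : ℝ) < M - 1 := by linarith
  have hMM : (0 : ℝ) < M * (M - 1) := mul_pos hMpos hM1
  set S := ∑ i, b i ^ 2 with hSdef
  have hS0 : 0 ≤ S := Finset.sum_nonneg fun i _ => sq_nonneg _
  set q := Real.sqrt (M * (M - 1)) with hq
  have hq0 : 0 < q := Real.sqrt_pos.mpr hMM
  have hq2 : q ^ 2 = M * (M - 1) := Real.sq_sqrt hMM.le
  set t := Real.sqrt (S / (M * (M - 1))) with ht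
  have ht0 : 0 ≤ t := Real.sqrt_nonneg _
  have htS : M * (M - 1) * t ^ 2 = S := by
    rw [ht, Real.sq_sqrt (by positivity)]
    field_simp
  have hsqrtS : Real.sqrt S = q * t := by
    rw [ht, Real.sqrt_div hS0, hq]
    field_simp
  have h32 : S ^ ((3 : ℝ) / 2) = Real.sqrt S ^ 3 := by
    rw [show ((3 : ℝ) / 2) = (1 / 2 : ℝ) * ((3 : ℕ) : ℝ) by norm_num,
      Real.rpow_mul hS0, Real.rpow_natCast, ← Real.sqrt_eq_rpow]
  have hRHS : (M - 2) / q * S ^ ((3 : ℝ) / 2) = M * (M - 1) * (M - 2) * t ^ 3 := by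
    rw [h32, hsqrtS, mul_pow, div_mul_eq_mul_div, div_eq_iff hq0.ne']
    linear_combination ((M - 2) * t ^ 3 * q) * hq2
  rw [hRHS]
  -- card of complement of a singleton
  have hccard : ∀ j : Fin m, ((({j} : Finset (Fin m))ᶜ.card : ℝ)) = M - 1 := by
    intro j
    rw [Finset.card_compl, Finset.card_singleton, Fintype.card_fin,
      Nat.cast_sub hm1, Nat.cast_one]
  constructor
  · intro heq
    have hb_le : ∀ i : Fin m, b i ≤ (M - 1) * t := by
      intro i
      have h0 : b i + ∑ k ∈ ({i} : Finset (Fin m))ᶜ, b k = 0 := by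
        rw [← Fintype.sum_eq_add_sum_compl]; exact hsum
      have h1 : b i ^ 2 + ∑ k ∈ ({i} : Finset (Fin m))ᶜ, b k ^ 2 = S :=
        (Fintype.sum_eq_add_sum_compl i (fun k => b k ^ 2)).symm
      have h2 : (∑ k ∈ ({i} : Finset (Fin m))ᶜ, b k) ^ 2 ≤
          (M - 1) * ∑ k ∈ ({i} : Finset (Fin m))ᶜ, b k ^ 2 := by
        have := sq_sum_le_card_mul_sum_sq (s := ({i} : Finset (Fin m))ᶜ) (f := b)
        rwa [hccard i] at this
      have h0' : ∑ k ∈ ({i} : Finset (Fin m))ᶜ, b k = -b i := by linarith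
      have h1' : ∑ k ∈ ({i} : Finset (Fin m))ᶜ, b k ^ 2 = S - b i ^ 2 := by linarith
      rw [h0', neg_sq, h1'] at h2
      have hb2 : M * b i ^ 2 ≤ (M - 1) * S := by nlinarith
      have hsq : b i ^ 2 ≤ ((M - 1) * t) ^ 2 := by nlinarith
      calc b i ≤ |b i| := le_abs_self _
        _ = Real.sqrt (b i ^ 2) := (Real.sqrt_sq_eq_abs _).symm
        _ ≤ Real.sqrt (((M - 1) * t) ^ 2) := Real.sqrt_le_sqrt hsq
        _ = (M - 1) * t := Real.sqrt_sq (mul_nonneg hM1.le ht0)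
    have hterm : ∀ i ∈ (univ : Finset (Fin m)),
        (b i + t) ^ 2 * (b i - (M - 1) * t) ≤ 0 := fun i _ =>
      mul_nonpos_of_nonneg_of_nonpos (sq_nonneg _) (by linarith [hb_le i])
    have hkey : ∑ i, (b i + t) ^ 2 * (b i - (M - 1) * t)
        = ∑ i, (b i) ^ 3 + (3 - M) * t * S - M * (M - 1) * t ^ 3 := by
      have hexp : ∀ i : Fin m, (b i + t) ^ 2 * (b i - (M - 1) * t)
          = (b i) ^ 3 + (3 - M) * t * (b i) ^ 2 + (3 - 2 * M) * t ^ 2 * b i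
            - (M - 1) * t ^ 3 := fun i => by ring
      rw [Finset.sum_congr rfl fun i _ => hexp i]
      rw [Finset.sum_sub_distrib, Finset.sum_add_distrib, Finset.sum_add_distrib,
        ← Finset.mul_sum, ← Finset.mul_sum, hsum, Finset.sum_const,
        Finset.card_univ, Fintype.card_fin, ← hSdef]

      ring
    have hzero : ∑ i, (b i + t) ^ 2 * (b i - (M - 1) * t) = 0 := by
      rw [hkey, heq, ← htS]; ring
    have hall := (Finset.sum_eq_zero_iff_of_nonpos hterm).mp hzero
    have hcases : ∀ i : Fin m, b i = -t ∨ b i = (M - 1) * t := by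
      intro i
      rcases mul_eq_zero.mp (hall i (Finset.mem_univ i)) with h | h
      · left
        have := pow_eq_zero_iff (n := 2) (by norm_num) |>.mp h
        linarith
      · right; linarith [sub_eq_zero.mp h]
    rcases eq_or_lt_of_le ht0 with ht0' | htpos
    · refine ⟨⟨0, by omega⟩, 0, le_refl 0, fun i _ => ?_⟩
      rcases hcases i with h | h <;> rw [h, ← ht0'] <;> ring
    · set A := Finset.univ.filter (fun i => b i = (M - 1) * t) with hA
      set B := Finset.univ.filter (fun i => ¬ b i = (M - 1) * t) with hB
      have hsplit : ∑ i ∈ A, b i + ∑ i ∈ B, b i = 0 := by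
        rw [hA, hB, Finset.sum_filter_add_sum_filter_not]; exact hsum
      have hAsum : ∑ i ∈ A, b i = (A.card : ℝ) * ((M - 1) * t) := by
        rw [Finset.sum_congr rfl fun i hi => (Finset.mem_filter.mp hi).2,
          Finset.sum_const, nsmul_eq_mul]
      have hBsum : ∑ i ∈ B, b i = (B.card : ℝ) * (-t) := by
        rw [Finset.sum_congr rfl (g := fun _ => -t) fun i hi => ?_,
          Finset.sum_const, nsmul_eq_mul]
        rcases hcases i with h | h
        · exact h
        · exact absurd h (Finset.mem_filter.mp hi).2
      have hcardsum : A.card + B.card = m := by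
        rw [hA, hB, Finset.card_filter_add_card_filter_not,
          Finset.card_univ, Fintype.card_fin]
      have hcardR : (A.card : ℝ) + (B.card : ℝ) = M := by
        rw [← Nat.cast_add, hcardsum]
      have hAcard1 : ((A.card : ℝ)) = 1 := by
        have h1 : (A.card : ℝ) * ((M - 1) * t) + (B.card : ℝ) * (-t) = 0 := by
          rw [← hAsum, ← hBsum]; exact hsplit
        have h2 : M * ((A.card : ℝ) - 1) * t = 0 := by linear_combination h1 + t * hcardR
        have h3 : (A.card : ℝ) - 1 = 0 := by
          rcases mul_eq_zero.mp h2 with h | h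
          · rcases mul_eq_zero.mp h with h | h
            · exact absurd h hMpos.ne'
            · exact h
          · exact absurd h htpos.ne'
        linarith
      have hAcard : A.card = 1 := by exact_mod_cast hAcard1
      obtain ⟨j, hj⟩ := Finset.card_eq_one.mp hAcard
      refine ⟨j, -t, by linarith, fun i hij => ?_⟩
      have hiA : i ∉ A := by
        rw [hj]; simpa using hij
      rcases hcases i with h | h
      · exact h
      · exact absurd (Finset.mem_filter.mpr ⟨Finset.mem_univ i, h⟩) hiA
  · rintro ⟨j, c, hc, hbc⟩
    have hmemc : ∀ i ∈ ({j} : Finset (Fin m))ᶜ, b i = c := by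
      intro i hi
      exact hbc i (by simpa using hi)
    have hsc : ∑ i ∈ ({j} : Finset (Fin m))ᶜ, b i = (M - 1) * c := by
      rw [Finset.sum_congr rfl hmemc, Finset.sum_const, nsmul_eq_mul, hccard j]
    have hsum' : b j + ∑ i ∈ ({j} : Finset (Fin m))ᶜ, b i = 0 := by
      rw [← Fintype.sum_eq_add_sum_compl]; exact hsum
    have hbj : b j = -((M - 1) * c) := by rw [hsc] at hsum'; linarith
    have hsc2 : ∑ i ∈ ({j} : Finset (Fin m))ᶜ, b i ^ 2 = (M - 1) * c ^ 2 := by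
      rw [Finset.sum_congr rfl fun i hi => by rw [hmemc i hi],
        Finset.sum_const, nsmul_eq_mul, hccard j]
    have hsc3 : ∑ i ∈ ({j} : Finset (Fin m))ᶜ, b i ^ 3 = (M - 1) * c ^ 3 := by
      rw [Finset.sum_congr rfl fun i hi => by rw [hmemc i hi],
        Finset.sum_const, nsmul_eq_mul, hccard j]
    have hSc : S = M * (M - 1) * c ^ 2 := by
      rw [hSdef, Fintype.sum_eq_add_sum_compl j, hsc2, hbj]; ring
    have htc : t = -c := by
      rw [ht, hSc, mul_div_cancel_left₀ _ hMM.ne', Real.sqrt_sq_eq_abs,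
        abs_of_nonpos hc]
    have hcube : ∑ i, b i ^ 3 = -(M * (M - 1) * (M - 2) * c ^ 3) := by
      rw [Fintype.sum_eq_add_sum_compl j, hsc3, hbj]; ring
    rw [hcube, htc]; ring

/-- Equality characterization in Okumura's Lemma: for `b 1, ..., b m` summing to zero,
the upper (resp. lower) bound is attained iff `m - 1` of the `bᵢ`'s are non-positive
(resp. non-negative) and equal. -/
theorem okumura_lemma_equality (m : ℕ) (hm : 2 ≤ m) (b : Fin m → ℝ)
    (hsum : ∑ i, b i = 0) :
    ((∑ i, (b i) ^ 3 =
        (((m : ℝ) - 2) / Real.sqrt ((m : ℝ) * ((m : ℝ) - 1))) *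
          (∑ i, (b i) ^ 2) ^ ((3 : ℝ) / 2)) ↔
      ∃ j : Fin m, ∃ c : ℝ, c ≤ 0 ∧ ∀ i : Fin m, i ≠ j → b i = c) ∧
    ((∑ i, (b i) ^ 3 =
        -((((m : ℝ) - 2) / Real.sqrt ((m : ℝ) * ((m : ℝ) - 1))) *
          (∑ i, (b i) ^ 2) ^ ((3 : ℝ) / 2))) ↔
      ∃ j : Fin m, ∃ c : ℝ, 0 ≤ c ∧ ∀ i : Fin m, i ≠ j → b i = c) := by
  constructor
  · exact okumura_upper m hm b hsum
  · have hsum' : ∑ i, (fun i => -(b i)) i = 0 := by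
      simpa [Finset.sum_neg_distrib] using congrArg Neg.neg hsum
    have h := okumura_upper m hm (fun i => -(b i)) hsum'
    have e3 : ∑ i, (fun i => -(b i)) i ^ 3 = -∑ i, b i ^ 3 := by
      rw [← Finset.sum_neg_distrib]
      exact Finset.sum_congr rfl fun i _ => by ring
    have e2 : ∑ i, (fun i => -(b i)) i ^ 2 = ∑ i, b i ^ 2 :=
      Finset.sum_congr rfl fun i _ => by ring
    rw [e3, e2] at h
    constructor
    · intro heq
      obtain ⟨j, c, hc, hbc⟩ := h.mp (by linarith)
      exact ⟨j, -c, by linarith, fun i hij => by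
        have h' : -b i = c := hbc i hij; linarith⟩
    · rintro ⟨j, c, hc, hbc⟩
      have := h.mpr ⟨j, -c, by linarith, fun i hij => show -b i = -c by
        rw [hbc i hij]⟩
      linarith
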